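/- Let (A, ·) be a perm algebra and 𝔅 a nondegenerate bilinear form on A with associated map 𝔅♯: A → A* given by ⟨𝔅♯(a), b⟩ = 𝔅(a, b), and let φ_𝔅 ∈ A ⊗ A be the 2-tensor with T_{φ_𝔅} = (𝔅♯)⁻¹. Then 𝔅 is skew-symmetric and invariant (i.e., 𝔅(a·b, c) = 𝔅(a, b·c − c·b) for all a, b, c) if and only if φ_𝔅 is skew-symmetric and (R, ad)-invariant. -/
import Mathlib


open TensorProduct

section
variable {K : Type*} [Field K] {A : Type*} [AddCommGroup A] [Module K A]

/-- perm identity for a plain binary operation -/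
def IsPermFn {X : Type*} (mu : X → X → X) : Prop :=
  ∀ a b c : X, mu a (mu b c) = mu (mu a b) c ∧ mu (mu a b) c = mu (mu b a) c

/-- perm algebra: bundled bilinear multiplication satisfying the perm identities -/
def IsPermMul (m : A →ₗ[K] A →ₗ[K] A) : Prop :=
  ∀ a b c : A, m a (m b c) = m (m a b) c ∧ m (m a b) c = m (m b a) c

/-- The map `T_r : A* → A` associated with a 2-tensor `r ∈ A ⊗ A`,
`T_r(a*) = Σ ⟨a*, a_i⟩ b_i` for `r = Σ a_i ⊗ b_i`. -/
noncomputable def Tten (r : A ⊗[K] A) : Module.Dual K A →ₗ[K] A :=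
  TensorProduct.lift (LinearMap.mk₂ K
    (fun a b => (Module.Dual.eval K A a).smulRight b)
    (by intro a a' b; ext f; simp [add_smul])
    (by intro c a b; ext f; simp [mul_smul])
    (by intro a b b'; ext f; simp [smul_add])
    (by intro c a b; ext f; simp [smul_comm c])) r

noncomputable def mulT (m : A →ₗ[K] A →ₗ[K] A) : A ⊗[K] A →ₗ[K] A := TensorProduct.lift m

noncomputable def p13_23 (m : A →ₗ[K] A →ₗ[K] A) :
    (A ⊗[K] A) ⊗[K] (A ⊗[K] A) →ₗ[K] (A ⊗[K] A) ⊗[K] A :=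
  (TensorProduct.map LinearMap.id (mulT m)) ∘ₗ
    (TensorProduct.tensorTensorTensorComm K A A A A).toLinearMap

noncomputable def p12_13 (m : A →ₗ[K] A →ₗ[K] A) :
    (A ⊗[K] A) ⊗[K] (A ⊗[K] A) →ₗ[K] (A ⊗[K] A) ⊗[K] A :=
  (TensorProduct.assoc K A A A).symm.toLinearMap ∘ₗ
    (TensorProduct.map (mulT m) LinearMap.id) ∘ₗ
    (TensorProduct.tensorTensorTensorComm K A A A A).toLinearMap

noncomputable def p13_12 (m : A →ₗ[K] A →ₗ[K] A) :
    (A ⊗[K] A) ⊗[K] (A ⊗[K] A) →ₗ[K] (A ⊗[K] A) ⊗[K] A :=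
  (TensorProduct.assoc K A A A).symm.toLinearMap ∘ₗ
    (TensorProduct.map (mulT m) (TensorProduct.comm K A A).toLinearMap) ∘ₗ
    (TensorProduct.tensorTensorTensorComm K A A A A).toLinearMap

noncomputable def p12_23 (m : A →ₗ[K] A →ₗ[K] A) :
    (A ⊗[K] A) ⊗[K] (A ⊗[K] A) →ₗ[K] (A ⊗[K] A) ⊗[K] A :=
  (TensorProduct.assoc K A A A).symm.toLinearMap ∘ₗ
    (TensorProduct.leftComm K A A A).toLinearMap ∘ₗ
    (TensorProduct.map (mulT m) LinearMap.id) ∘ₗ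
    (TensorProduct.tensorTensorTensorComm K A A A A).toLinearMap ∘ₗ
    (TensorProduct.map (TensorProduct.comm K A A).toLinearMap LinearMap.id)

/-- `[[r,r]] = r₁₂·r₂₃ − r₁₃·r₂₃ + r₁₂·r₁₃ − r₁₃·r₁₂` -/
noncomputable def ybrac (m : A →ₗ[K] A →ₗ[K] A) (r : A ⊗[K] A) : (A ⊗[K] A) ⊗[K] A :=
  p12_23 m (r ⊗ₜ r) - p13_23 m (r ⊗ₜ r) + p12_13 m (r ⊗ₜ r) - p13_12 m (r ⊗ₜ r)

/-- the perm Yang-Baxter equation -/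
noncomputable def IsPYBESol (m : A →ₗ[K] A →ₗ[K] A) (r : A ⊗[K] A) : Prop := ybrac m r = 0

/-- `(id ⊗ R(a) − ad(a) ⊗ id)(s) = 0` for all `a`. -/
def RadInv (m : A →ₗ[K] A →ₗ[K] A) (s : A ⊗[K] A) : Prop :=
  ∀ a : A, TensorProduct.map LinearMap.id (m.flip a) s
    = TensorProduct.map (m a - m.flip a) LinearMap.id s

variable {V : Type*} [AddCommGroup V] [Module K V]

/-- representation of a perm algebra -/
def IsPermRep (m : A →ₗ[K] A →ₗ[K] A) (l rr : A →ₗ[K] V →ₗ[K] V) : Prop :=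
  ∀ a b : A, l (m a b) = l a ∘ₗ l b ∧ l a ∘ₗ l b = l b ∘ₗ l a ∧
    rr (m a b) = rr b ∘ₗ rr a ∧ rr b ∘ₗ rr a = rr b ∘ₗ l a ∧ rr b ∘ₗ l a = l a ∘ₗ rr b

/-- A-perm algebra -/
def IsAPermAlg (m : A →ₗ[K] A →ₗ[K] A) (l rr : A →ₗ[K] V →ₗ[K] V)
    (mV : V →ₗ[K] V →ₗ[K] V) : Prop :=
  IsPermRep m l rr ∧ IsPermMul mV ∧
  (∀ (a : A) (u w : V), rr a (mV u w) = rr a (mV w u) ∧ rr a (mV u w) = mV u (rr a w)) ∧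
  (∀ (a : A) (u w : V), mV (l a u) w = mV (rr a u) w ∧ mV (l a u) w = l a (mV u w) ∧
    l a (mV u w) = mV u (l a w))


lemma Tten_tmul (a b : A) (f : Module.Dual K A) : Tten (a ⊗ₜ[K] b) f = f a • b := by
  simp [Tten]

lemma Tten_add (r s : A ⊗[K] A) : Tten (r + s) = Tten r + Tten s := by
  simp [Tten]

lemma Tten_neg (r : A ⊗[K] A) : Tten (-r) = -Tten r := by
  simp [Tten]

lemma my_dual_ext {x y : A} (h : ∀ g : Module.Dual K A, g x = g y) : x = y := by
  rw [← sub_eq_zero, ← Module.forall_dual_apply_eq_zero_iff K (x - y)]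
  intro f; simp [h f]

lemma Tten_comm (r : A ⊗[K] A) (f g : Module.Dual K A) :
    g (Tten ((TensorProduct.comm K A A) r) f) = f (Tten r g) := by
  induction r using TensorProduct.induction_on with
  | zero => simp [Tten]
  | tmul a b => simp [Tten_tmul, mul_comm]
  | add x y hx hy => simp only [map_add, Tten_add, LinearMap.add_apply, hx, hy]

lemma Tten_map (φ' ψ : A →ₗ[K] A) (r : A ⊗[K] A) (f : Module.Dual K A) :
    Tten (TensorProduct.map φ' ψ r) f = ψ (Tten r (f ∘ₗ φ')) := by
  induction r using TensorProduct.induction_on with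
  | zero => simp [Tten]
  | tmul a b => simp [Tten_tmul]
  | add x y hx hy => simp only [map_add, Tten_add, LinearMap.add_apply, hx, hy]

lemma Tten_eq (r : A ⊗[K] A) :
    Tten r = dualTensorHom K (Module.Dual K A) A
      (TensorProduct.map (Module.Dual.eval K A) LinearMap.id r) := by
  induction r using TensorProduct.induction_on with
  | zero => simp [Tten]
  | tmul a b => ext f; simp [Tten_tmul]
  | add x y hx hy => simp only [map_add, Tten_add, hx, hy]

lemma Tten_inj [FiniteDimensional K A] {r s : A ⊗[K] A} (h : Tten r = Tten s) : r = s := by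
  rw [Tten_eq r, Tten_eq s] at h
  have hd : Function.Injective (dualTensorHom K (Module.Dual K A) A) := by
    intro x y hxy
    have := congrArg (dualTensorHomEquivOfBasis
      (N := A) (Module.Free.chooseBasis K (Module.Dual K A))).symm
      (by simpa using hxy)
    simpa using this
  have h2 := hd h
  have hm : Function.Injective
      (TensorProduct.map (Module.Dual.eval K A) (LinearMap.id : A →ₗ[K] A)) := by
    have : (TensorProduct.map (Module.Dual.eval K A) (LinearMap.id : A →ₗ[K] A))
        = (TensorProduct.congr (Module.evalEquiv K A) (LinearEquiv.refl K A)).toLinearMap := by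
      ext a b; simp [TensorProduct.congr_tmul, Module.evalEquiv]
    rw [this]
    exact (TensorProduct.congr (Module.evalEquiv K A) (LinearEquiv.refl K A)).injective
  exact hm h2

theorem stmt11 [FiniteDimensional K A] (m : A →ₗ[K] A →ₗ[K] A) (hm : IsPermMul m)
    (B : A →ₗ[K] A →ₗ[K] K) (hB : Function.Bijective B)
    (φ : A ⊗[K] A) (hφ1 : ∀ a : A, Tten φ (B a) = a)
    (hφ2 : ∀ f : Module.Dual K A, B (Tten φ f) = f) :
    ((∀ a b : A, B a b = - B b a) ∧ ∀ a b c : A, B (m a b) c = B a (m b c - m c b)) ↔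
      ((TensorProduct.comm K A A) φ = -φ ∧ RadInv m φ) := by
  constructor
  · rintro ⟨hskew, hinv⟩
    constructor
    · apply Tten_inj
      rw [Tten_neg]
      ext f
      refine my_dual_ext (K := K) fun g => ?_

      obtain ⟨a, ha⟩ := hB.2 f
      obtain ⟨b, hb⟩ := hB.2 g
      rw [Tten_comm]
      subst ha hb
      simp only [hφ1, LinearMap.neg_apply, map_neg]
      rw [hskew]
    · intro a
      apply Tten_inj
      ext f
      rw [Tten_map, Tten_map]
      simp only [LinearMap.id_coe, id_eq, LinearMap.comp_id]
      -- LHS : m.flip a (Tten φ f), RHS : Tten φ (f ∘ₗ (m a - m.flip a))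
      refine hB.injective ?_
      rw [hφ2]
      have hf : B (Tten φ f) = f := hφ2 f
      set x := Tten φ f with hx
      ext c
      simp only [LinearMap.comp_apply, LinearMap.sub_apply, LinearMap.flip_apply]
      rw [← hf]
      have := hinv x a c
      simpa [map_sub] using this
  · rintro ⟨hskew, hinv⟩
    constructor
    · intro a b
      have h1 : Tten ((TensorProduct.comm K A A) φ) = Tten (-φ) := by rw [hskew]
      have h2 := congrArg (fun T => (B a) (T (B b))) h1
      simp only [Tten_neg, LinearMap.neg_apply, map_neg] at h2
      rw [Tten_comm] at h2
      simp only [hφ1] at h2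
      rw [h2, neg_neg]
    · intro a b c
      have h1 := congrArg Tten (hinv b)
      have h2 := congrArg (fun T => T (B a)) h1
      simp only [Tten_map, LinearMap.id_coe, id_eq, LinearMap.comp_id, hφ1] at h2
      have h3 := congrArg (fun x => B x c) h2
      simp only [LinearMap.flip_apply] at h3
      rw [hφ2] at h3
      simpa [map_sub] using h3

end
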